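/- (Multivariate Weierstrass preparation, commutative power series case.) Let k be a finite field, R = k[[x_1, …, x_n]], and let ⪯ be an additive total order on ℕⁿ. Let 0 ≠ f ∈ R. Then there exist unique elements u ∈ R^× (a unit) and F ∈ R such that: (i) f = uF; (ii) the coefficient of F at LM(f) equals 1; and (iii) supp(F) ∩ (LM(f) + ℕⁿ) = {LM(f)}. In particular, LM(F) = LM(f). -/

import Mathlib

/-- The support of a multivariate power series: the set of exponents with nonzero
coefficient. -/
def psupp {n : ℕ} {k : Type*} [Semiring k] (f : MvPowerSeries (Fin n) k) :
    Set (Fin n →₀ ℕ) :=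
  {α | MvPowerSeries.coeff α f ≠ 0}

/-- `IsLM le f μ` says that `μ` is the least monomial `LM(f)` of `f` with respect to the
order `le`: `μ` lies in the support of `f` and is `le`-smaller than every element of the
support.  (In particular this forces `f ≠ 0`.) -/
def IsLM {n : ℕ} {k : Type*} [Semiring k] (le : (Fin n →₀ ℕ) → (Fin n →₀ ℕ) → Prop)
    (f : MvPowerSeries (Fin n) k) (μ : Fin n →₀ ℕ) : Prop :=
  μ ∈ psupp f ∧ ∀ ν ∈ psupp f, le μ ν

/-- `le` is an additive total order on `ℕⁿ`: a total order such that `0 ⪯ α` for all `α`,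
and `α ⪯ β` implies `α + γ ⪯ β + γ`.  (Every such order is a well-order.) -/
structure IsAdditiveTotalOrder {n : ℕ} (le : (Fin n →₀ ℕ) → (Fin n →₀ ℕ) → Prop) : Prop where
  total : ∀ α β, le α β ∨ le β α
  antisymm : ∀ α β, le α β → le β α → α = β
  trans : ∀ α β γ, le α β → le β γ → le α γ
  zero_le : ∀ α, le 0 α
  add_right : ∀ α β γ, le α β → le (α + γ) (β + γ)

/-- Membership in `Δ_{F,r} = (LM(f_r) + ℕⁿ) ∖ ⋃_{i<r} Δ_{F,i}`, where `μ i = LM(f_i)`.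
(Unwinding the recursion, `Δ_{F,r} = (μ r + ℕⁿ) ∖ ⋃_{i<r} (μ i + ℕⁿ)`.) -/
def InDelta {n s : ℕ} (μ : Fin s → (Fin n →₀ ℕ)) (r : Fin s) (β : Fin n →₀ ℕ) : Prop :=
  (∃ γ, β = μ r + γ) ∧ ∀ i : Fin s, i < r → ¬ ∃ γ, β = μ i + γ

/-- Membership in `Δ̄_F = ℕⁿ ∖ ⋃_{i=1}^s Δ_{F,i} = ℕⁿ ∖ ⋃_{i=1}^s (μ i + ℕⁿ)`. -/
def InDeltaBar {n s : ℕ} (μ : Fin s → (Fin n →₀ ℕ)) (β : Fin n →₀ ℕ) : Prop :=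
  ∀ i : Fin s, ¬ ∃ γ, β = μ i + γ

namespace S16

variable {n : ℕ} {k : Type*} [Field k]

/-- strict version of `le` -/
def slt (le : (Fin n →₀ ℕ) → (Fin n →₀ ℕ) → Prop) (a b : Fin n →₀ ℕ) : Prop :=
  le a b ∧ a ≠ b

theorem le_refl {le : (Fin n →₀ ℕ) → (Fin n →₀ ℕ) → Prop} (hle : IsAdditiveTotalOrder le)
    (a : Fin n →₀ ℕ) : le a a := (hle.total a a).elim id id

theorem le_of_pointwise {le : (Fin n →₀ ℕ) → (Fin n →₀ ℕ) → Prop}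
    (hle : IsAdditiveTotalOrder le) {a b : Fin n →₀ ℕ} (h : ∃ c, b = a + c) : le a b := by
  obtain ⟨c, rfl⟩ := h
  have := hle.add_right 0 c a (hle.zero_le c)
  rwa [zero_add, add_comm c a] at this

theorem slt_wf {le : (Fin n →₀ ℕ) → (Fin n →₀ ℕ) → Prop} (hle : IsAdditiveTotalOrder le) :
    WellFounded (slt le) := by
  haveI : IsIrrefl (Fin n →₀ ℕ) (slt le) := ⟨fun a h => h.2 rfl⟩
  haveI : IsTrans (Fin n →₀ ℕ) (slt le) := ⟨fun a b c h1 h2 =>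
    ⟨hle.trans _ _ _ h1.1 h2.1, fun hac => h1.2 (hle.antisymm _ _ h1.1 (hac ▸ h2.1))⟩⟩
  haveI : IsStrictOrder (Fin n →₀ ℕ) (slt le) := ⟨⟩
  rw [RelEmbedding.wellFounded_iff_isEmpty]
  constructor
  intro g
  obtain ⟨m, N, hmN, hle'⟩ := (Set.isPWO_of_wellQuasiOrderedLE (Set.univ : Set (Fin n →₀ ℕ))).exists_lt
    (f := fun i => g i) (fun _ => Set.mem_univ _)
  have h1 : le (g m) (g N) := le_of_pointwise hle (le_iff_exists_add.mp hle')
  have h2 : slt le (g N) (g m) := g.map_rel_iff.mpr hmN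
  exact h2.2 (hle.antisymm _ _ h2.1 h1)

theorem le_cancel {le : (Fin n →₀ ℕ) → (Fin n →₀ ℕ) → Prop} (hle : IsAdditiveTotalOrder le)
    {α β δ : Fin n →₀ ℕ} (h : le (α + δ) (β + δ)) : le α β := by
  rcases hle.total α β with h' | h'
  · exact h'
  · have h2 := hle.antisymm _ _ h (hle.add_right _ _ δ h')
    have : α = β := add_right_cancel h2
    exact this ▸ le_refl hle β

theorem descent {le : (Fin n →₀ ℕ) → (Fin n →₀ ℕ) → Prop} (hle : IsAdditiveTotalOrder le)
    {f : MvPowerSeries (Fin n) k} {lmf : Fin n →₀ ℕ} (hlmf : IsLM le f lmf)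
    {γ : Fin n →₀ ℕ} {p : (Fin n →₀ ℕ) × (Fin n →₀ ℕ)}
    (h1 : p.1 + p.2 = lmf + γ) (h2 : p.2 ≠ lmf) (h3 : MvPowerSeries.coeff p.2 f ≠ 0) :
    slt le p.1 γ := by
  have hml : le lmf p.2 := hlmf.2 p.2 h3
  constructor
  · apply le_cancel hle (δ := lmf)
    have := hle.add_right lmf p.2 p.1 hml
    rw [add_comm lmf p.1] at this
    rw [add_comm p.2 p.1, h1, add_comm lmf γ] at this
    exact this
  · rintro rfl
    apply h2
    have h1' : p.2 + p.1 = lmf + p.1 := by rw [add_comm p.2 p.1]; exact h1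
    exact add_right_cancel h1'

end S16

namespace S16

variable {n : ℕ} {k : Type*} [Field k]

open Classical in
noncomputable def wfun {le : (Fin n →₀ ℕ) → (Fin n →₀ ℕ) → Prop}
    (hle : IsAdditiveTotalOrder le)
    (f : MvPowerSeries (Fin n) k) (lmf : Fin n →₀ ℕ) (hlmf : IsLM le f lmf) :
    MvPowerSeries (Fin n) k :=
  (slt_wf hle).fix (fun γ ih =>
    (MvPowerSeries.coeff lmf f)⁻¹ *
      ((if γ = 0 then 1 else 0) -
        ∑ p ∈ (Finset.HasAntidiagonal.antidiagonal (lmf + γ)).attach,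
          if h : p.1.2 ≠ lmf ∧ MvPowerSeries.coeff p.1.2 f ≠ 0 then
            ih p.1.1 (descent hle hlmf (Finset.HasAntidiagonal.mem_antidiagonal.mp p.2) h.1 h.2)
              * MvPowerSeries.coeff p.1.2 f
          else 0))

open Classical in
theorem wfun_eq {le : (Fin n →₀ ℕ) → (Fin n →₀ ℕ) → Prop}
    (hle : IsAdditiveTotalOrder le)
    (f : MvPowerSeries (Fin n) k) (lmf : Fin n →₀ ℕ) (hlmf : IsLM le f lmf)
    (γ : Fin n →₀ ℕ) :
    MvPowerSeries.coeff γ (wfun hle f lmf hlmf) =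
      (MvPowerSeries.coeff lmf f)⁻¹ *
        ((if γ = 0 then 1 else 0) -
          ∑ p ∈ Finset.HasAntidiagonal.antidiagonal (lmf + γ),
            if p.2 ≠ lmf ∧ MvPowerSeries.coeff p.2 f ≠ 0 then
              MvPowerSeries.coeff p.1 (wfun hle f lmf hlmf)
                * MvPowerSeries.coeff p.2 f
            else 0) := by
  rw [MvPowerSeries.coeff_apply]
  conv_lhs => rw [wfun, WellFounded.fix_eq]
  congr 2
  rw [← Finset.sum_attach (Finset.HasAntidiagonal.antidiagonal (lmf + γ))
    (fun p => if p.2 ≠ lmf ∧ MvPowerSeries.coeff p.2 f ≠ 0 then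
        MvPowerSeries.coeff p.1 (wfun hle f lmf hlmf) * MvPowerSeries.coeff p.2 f
      else 0)]
  apply Finset.sum_congr rfl
  intro p _
  by_cases h : p.1.2 ≠ lmf ∧ MvPowerSeries.coeff p.1.2 f ≠ 0
  · rw [dif_pos h, if_pos h]
    rfl
  · rw [dif_neg h, if_neg h]

open Classical in
theorem coeff_mul_expand {le : (Fin n →₀ ℕ) → (Fin n →₀ ℕ) → Prop}
    (hle : IsAdditiveTotalOrder le)
    {f : MvPowerSeries (Fin n) k} {lmf : Fin n →₀ ℕ} (hlmf : IsLM le f lmf)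
    (w : MvPowerSeries (Fin n) k) (γ : Fin n →₀ ℕ) :
    MvPowerSeries.coeff (lmf + γ) (w * f) =
      MvPowerSeries.coeff γ w * MvPowerSeries.coeff lmf f +
      ∑ p ∈ Finset.HasAntidiagonal.antidiagonal (lmf + γ),
        if p.2 ≠ lmf ∧ MvPowerSeries.coeff p.2 f ≠ 0 then
          MvPowerSeries.coeff p.1 w * MvPowerSeries.coeff p.2 f
        else 0 := by
  rw [MvPowerSeries.coeff_mul]
  have split : ∀ p ∈ Finset.HasAntidiagonal.antidiagonal (lmf + γ),
      MvPowerSeries.coeff p.1 w * MvPowerSeries.coeff p.2 f =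
      (if p.2 ≠ lmf ∧ MvPowerSeries.coeff p.2 f ≠ 0 then
          MvPowerSeries.coeff p.1 w * MvPowerSeries.coeff p.2 f else 0) +
      (if p.2 ≠ lmf ∧ MvPowerSeries.coeff p.2 f ≠ 0 then 0 else
          MvPowerSeries.coeff p.1 w * MvPowerSeries.coeff p.2 f) := by
    intro p _
    split <;> simp
  rw [Finset.sum_congr rfl split, Finset.sum_add_distrib, add_comm]
  congr 1
  have hmem : ((γ, lmf) : (Fin n →₀ ℕ) × (Fin n →₀ ℕ)) ∈ Finset.HasAntidiagonal.antidiagonal (lmf + γ) := by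
    rw [Finset.HasAntidiagonal.mem_antidiagonal]; exact add_comm γ lmf
  have hother : ∀ p ∈ Finset.HasAntidiagonal.antidiagonal (lmf + γ), p ≠ (γ, lmf) →
      (if p.2 ≠ lmf ∧ MvPowerSeries.coeff p.2 f ≠ 0 then 0 else
        MvPowerSeries.coeff p.1 w * MvPowerSeries.coeff p.2 f) = 0 := by
    intro p hp hne
    by_cases h : p.2 ≠ lmf ∧ MvPowerSeries.coeff p.2 f ≠ 0
    · rw [if_pos h]
    · rw [if_neg h]
      rcases not_and_or.mp h with h2 | h3
      · push_neg at h2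
        exfalso
        apply hne
        have hpm := Finset.HasAntidiagonal.mem_antidiagonal.mp hp
        rw [h2, add_comm p.1 lmf] at hpm
        have : p.1 = γ := add_left_cancel hpm
        exact Prod.ext this h2
      · push_neg at h3
        rw [h3, mul_zero]
  rw [Finset.sum_eq_single_of_mem (γ, lmf) hmem hother, if_neg (fun h => h.1 rfl)]

open Classical in
theorem solution_unique {le : (Fin n →₀ ℕ) → (Fin n →₀ ℕ) → Prop}
    (hle : IsAdditiveTotalOrder le)
    {f : MvPowerSeries (Fin n) k} {lmf : Fin n →₀ ℕ} (hlmf : IsLM le f lmf)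
    (w₁ w₂ : MvPowerSeries (Fin n) k)
    (h₁ : ∀ γ, MvPowerSeries.coeff (lmf + γ) (w₁ * f) = if γ = 0 then 1 else 0)
    (h₂ : ∀ γ, MvPowerSeries.coeff (lmf + γ) (w₂ * f) = if γ = 0 then 1 else 0) :
    w₁ = w₂ := by
  have hc : MvPowerSeries.coeff lmf f ≠ 0 := hlmf.1
  apply MvPowerSeries.ext
  intro γ
  induction γ using (slt_wf hle).induction with
  | _ γ ih =>
  have e1 := coeff_mul_expand hle hlmf w₁ γ
  have e2 := coeff_mul_expand hle hlmf w₂ γ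
  rw [h₁ γ] at e1
  rw [h₂ γ] at e2
  have hsum : (∑ p ∈ Finset.HasAntidiagonal.antidiagonal (lmf + γ),
        if p.2 ≠ lmf ∧ MvPowerSeries.coeff p.2 f ≠ 0 then
          MvPowerSeries.coeff p.1 w₁ * MvPowerSeries.coeff p.2 f else 0) =
      ∑ p ∈ Finset.HasAntidiagonal.antidiagonal (lmf + γ),
        if p.2 ≠ lmf ∧ MvPowerSeries.coeff p.2 f ≠ 0 then
          MvPowerSeries.coeff p.1 w₂ * MvPowerSeries.coeff p.2 f else 0 := by
    apply Finset.sum_congr rfl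
    intro p hp
    by_cases h : p.2 ≠ lmf ∧ MvPowerSeries.coeff p.2 f ≠ 0
    · rw [if_pos h, if_pos h,
        ih p.1 (descent hle hlmf (Finset.HasAntidiagonal.mem_antidiagonal.mp hp) h.1 h.2)]
    · rw [if_neg h, if_neg h]
  rw [hsum] at e1
  have e3 := e1.symm.trans e2
  have e4 := add_right_cancel e3
  exact mul_right_cancel₀ hc e4

open Classical in
theorem wfun_solves {le : (Fin n →₀ ℕ) → (Fin n →₀ ℕ) → Prop}
    (hle : IsAdditiveTotalOrder le)
    {f : MvPowerSeries (Fin n) k} {lmf : Fin n →₀ ℕ} (hlmf : IsLM le f lmf)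
    (γ : Fin n →₀ ℕ) :
    MvPowerSeries.coeff (lmf + γ) (wfun hle f lmf hlmf * f) =
      if γ = 0 then 1 else 0 := by
  have hc : MvPowerSeries.coeff lmf f ≠ 0 := hlmf.1
  rw [coeff_mul_expand hle hlmf, wfun_eq hle f lmf hlmf γ]
  generalize (if γ = 0 then (1 : k) else 0) = t
  generalize (∑ p ∈ Finset.HasAntidiagonal.antidiagonal (lmf + γ),
      if p.2 ≠ lmf ∧ MvPowerSeries.coeff p.2 f ≠ 0 then
        MvPowerSeries.coeff p.1 (wfun hle f lmf hlmf) * MvPowerSeries.coeff p.2 f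
      else 0) = S
  field_simp
  ring

open Classical in
theorem wfun_zero_mul {le : (Fin n →₀ ℕ) → (Fin n →₀ ℕ) → Prop}
    (hle : IsAdditiveTotalOrder le)
    {f : MvPowerSeries (Fin n) k} {lmf : Fin n →₀ ℕ} (hlmf : IsLM le f lmf) :
    MvPowerSeries.coeff 0 (wfun hle f lmf hlmf) * MvPowerSeries.coeff lmf f = 1 := by
  have e := coeff_mul_expand hle hlmf (wfun hle f lmf hlmf) 0
  rw [wfun_solves hle hlmf 0, if_pos rfl] at e
  have hS : (∑ p ∈ Finset.HasAntidiagonal.antidiagonal (lmf + 0),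
      if p.2 ≠ lmf ∧ MvPowerSeries.coeff p.2 f ≠ 0 then
        MvPowerSeries.coeff p.1 (wfun hle f lmf hlmf) * MvPowerSeries.coeff p.2 f
      else 0) = 0 := by
    apply Finset.sum_eq_zero
    intro p hp
    rw [if_neg]
    rintro ⟨h2, h3⟩
    have hpm := Finset.HasAntidiagonal.mem_antidiagonal.mp hp
    rw [add_zero] at hpm
    have h4 : le p.2 lmf := le_of_pointwise hle ⟨p.1, by rw [add_comm]; exact hpm.symm⟩
    exact h2 (hle.antisymm _ _ (hlmf.2 p.2 h3) h4).symm
  rw [hS, add_zero] at e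
  exact e.symm

end S16


/-- multivariate Weierstrass preparation, commutative power series case.
Let `k` be a finite field, `R = k[[x_1, …, x_n]]`, `⪯` an additive total order on `ℕⁿ`.
Let `0 ≠ f ∈ R` with least monomial `LM(f) = lmf`.  Then there are unique `u ∈ Rˣ` and
`F ∈ R` such that (i) `f = u F`; (ii) the coefficient of `F` at `LM(f)` is `1`;
(iii) `supp(F) ∩ (LM(f) + ℕⁿ) = {LM(f)}`.  In particular `LM(F) = LM(f)`. -/
theorem statement16
    {n : ℕ} {k : Type*} [Field k] [Finite k]
    (le : (Fin n →₀ ℕ) → (Fin n →₀ ℕ) → Prop) (hle : IsAdditiveTotalOrder le)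
    (f : MvPowerSeries (Fin n) k) (hf : f ≠ 0)
    (lmf : Fin n →₀ ℕ) (hlmf : IsLM le f lmf) :
    ∃ (u : (MvPowerSeries (Fin n) k)ˣ) (F : MvPowerSeries (Fin n) k),
      f = ↑u * F ∧
      MvPowerSeries.coeff lmf F = 1 ∧
      psupp F ∩ {β | ∃ γ, β = lmf + γ} = {lmf} ∧
      IsLM le F lmf ∧
      ∀ (u' : (MvPowerSeries (Fin n) k)ˣ) (F' : MvPowerSeries (Fin n) k),
        f = ↑u' * F' →
        MvPowerSeries.coeff lmf F' = 1 →
        psupp F' ∩ {β | ∃ γ, β = lmf + γ} = {lmf} →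
        u' = u ∧ F' = F := by
  classical
  set V := S16.wfun hle f lmf hlmf with hVdef
  have hc : MvPowerSeries.coeff lmf f ≠ 0 := hlmf.1
  have hV0 := S16.wfun_zero_mul hle hlmf
  have hV0ne : MvPowerSeries.coeff 0 V ≠ 0 := left_ne_zero_of_mul_eq_one hV0
  have hVunit : IsUnit V := by
    rw [MvPowerSeries.isUnit_iff_constantCoeff]
    rw [← MvPowerSeries.coeff_zero_eq_constantCoeff_apply]
    exact hV0ne.isUnit
  obtain ⟨Vu, hVu⟩ := hVunit
  have hcoeff1 : MvPowerSeries.coeff lmf (V * f) = 1 := by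
    have := S16.wfun_solves hle hlmf 0
    rw [add_zero, if_pos rfl] at this
    exact this
  refine ⟨Vu⁻¹, V * f, ?_, hcoeff1, ?_, ?_, ?_⟩
  · rw [← hVu, ← mul_assoc, ← Units.val_mul, inv_mul_cancel, Units.val_one, one_mul]
  · ext β
    constructor
    · rintro ⟨hβ, γ, rfl⟩
      have := S16.wfun_solves hle hlmf γ
      by_cases hγ : γ = 0
      · subst hγ; simp
      · rw [if_neg hγ] at this
        exact absurd this hβ
    · intro hβ
      rw [Set.mem_singleton_iff] at hβ
      subst hβ
      refine ⟨?_, 0, (add_zero _).symm⟩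
      show MvPowerSeries.coeff _ (V * f) ≠ 0
      rw [hcoeff1]; exact one_ne_zero
  · constructor
    · show MvPowerSeries.coeff lmf (V * f) ≠ 0
      rw [hcoeff1]; exact one_ne_zero
    · intro ν hν
      have hν' : MvPowerSeries.coeff ν (V * f) ≠ 0 := hν
      rw [MvPowerSeries.coeff_mul] at hν'
      obtain ⟨p, hp, hpne⟩ := Finset.exists_ne_zero_of_sum_ne_zero hν'
      have h3 : MvPowerSeries.coeff p.2 f ≠ 0 := right_ne_zero_of_mul hpne
      have h4 : le p.2 ν := S16.le_of_pointwise hle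
        ⟨p.1, by rw [add_comm]; exact (Finset.HasAntidiagonal.mem_antidiagonal.mp hp).symm⟩
      exact hle.trans _ _ _ (hlmf.2 p.2 h3) h4
  · intro u' F' h1 h2 h3
    have hwF' : (↑u'⁻¹ : MvPowerSeries (Fin n) k) * f = F' := by
      rw [h1, ← mul_assoc, ← Units.val_mul, inv_mul_cancel, Units.val_one, one_mul]
    have hsolve : ∀ γ, MvPowerSeries.coeff (lmf + γ)
        ((↑u'⁻¹ : MvPowerSeries (Fin n) k) * f) = if γ = 0 then 1 else 0 := by
      intro γ
      rw [hwF']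
      by_cases hγ : γ = 0
      · rw [if_pos hγ, hγ, add_zero, h2]
      · rw [if_neg hγ]
        by_contra hne
        have hmem : lmf + γ ∈ psupp F' ∩ {β | ∃ γ, β = lmf + γ} :=
          Set.mem_inter hne ⟨γ, rfl⟩
        rw [h3] at hmem
        have h6 : lmf + γ = lmf := hmem
        exact hγ (add_eq_left.mp h6)
    have hwV : (↑u'⁻¹ : MvPowerSeries (Fin n) k) = V :=
      S16.solution_unique hle hlmf _ _ hsolve (S16.wfun_solves hle hlmf)
    have h5 : u'⁻¹ = Vu := Units.ext (by rw [hVu]; exact hwV)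
    constructor
    · rw [← h5, inv_inv]
    · rw [← hwF', hwV]
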